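/- Let ⟨z,w⟩ = Σ_{k=1}^{e} z^k conj(w^k) − Σ_{k=e+1}^{n} z^k conj(w^k) be a nondegenerate Hermitian form on ℂ^n, and let Δ = Σ_{k=1}^{e} ∂²/∂z^k∂z̄^k − Σ_{k=e+1}^{n} ∂²/∂z^k∂z̄^k. Then for any n×n complex matrix A, Δ applied to the polynomial ⟨z,z⟩·⟨Az,z⟩ equals (n+2)⟨Az,z⟩ + Tr(A)·⟨z,z⟩. -/
import Mathlib


open MvPolynomial

/-- Signature coefficients of the Hermitian form of signature `(e, n-e)`. -/
noncomputable def eps (n e : ℕ) (k : Fin n) : ℂ := if (k : ℕ) < e then 1 else -1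

/-- The polynomial `⟨z,z⟩ = Σ ε_k z^k z̄^k`, with `X (Sum.inl k)` playing `z^k`
and `X (Sum.inr k)` playing `z̄^k`. -/
noncomputable def hermPoly (n e : ℕ) : MvPolynomial (Fin n ⊕ Fin n) ℂ :=
  ∑ k : Fin n, C (eps n e k) * X (Sum.inl k) * X (Sum.inr k)

/-- The polynomial `⟨Az,z⟩ = Σ ε_k (Az)^k z̄^k`. -/
noncomputable def hermPolyA (n e : ℕ) (A : Matrix (Fin n) (Fin n) ℂ) :
    MvPolynomial (Fin n ⊕ Fin n) ℂ :=
  ∑ k : Fin n, C (eps n e k) * (∑ j : Fin n, C (A k j) * X (Sum.inl j)) * X (Sum.inr k)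

/-- The signature-`(e, n-e)` Laplacian `Δ = Σ ε_k ∂²/∂z^k ∂z̄^k`. -/
noncomputable def Lap (n e : ℕ) (P : MvPolynomial (Fin n ⊕ Fin n) ℂ) :
    MvPolynomial (Fin n ⊕ Fin n) ℂ :=
  ∑ k : Fin n, C (eps n e k) * pderiv (Sum.inl k) (pderiv (Sum.inr k) P)

lemma eps_sq (n e : ℕ) (k : Fin n) : eps n e k * eps n e k = 1 := by
  unfold eps; split <;> ring

lemma dP_inr (n e : ℕ) (k : Fin n) :
    pderiv (Sum.inr k) (hermPoly n e) = C (eps n e k) * X (Sum.inl k) := by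
  unfold hermPoly
  rw [map_sum, Finset.sum_eq_single k]
  · simp [pderiv_mul, pderiv_X]
  · intro b _ hb
    simp [pderiv_mul, pderiv_X, Pi.single_apply, hb]
  · simp

lemma dP_inl (n e : ℕ) (k : Fin n) :
    pderiv (Sum.inl k) (hermPoly n e) = C (eps n e k) * X (Sum.inr k) := by
  unfold hermPoly
  rw [map_sum, Finset.sum_eq_single k]
  · simp [pderiv_mul, pderiv_X, mul_comm]
  · intro b _ hb
    simp [pderiv_mul, pderiv_X, Pi.single_apply, hb]
  · simp

lemma dQ_inr (n e : ℕ) (A : Matrix (Fin n) (Fin n) ℂ) (k : Fin n) :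
    pderiv (Sum.inr k) (hermPolyA n e A)
      = C (eps n e k) * (∑ j : Fin n, C (A k j) * X (Sum.inl j)) := by
  unfold hermPolyA
  rw [map_sum, Finset.sum_eq_single k]
  · simp [pderiv_mul, pderiv_X]
  · intro b _ hb
    simp [pderiv_mul, pderiv_X, Pi.single_apply, hb]
  · simp

lemma dQ_inl (n e : ℕ) (A : Matrix (Fin n) (Fin n) ℂ) (k : Fin n) :
    pderiv (Sum.inl k) (hermPolyA n e A)
      = ∑ m : Fin n, C (eps n e m * A m k) * X (Sum.inr m) := by
  unfold hermPolyA
  rw [map_sum]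
  refine Finset.sum_congr rfl fun m _ => ?_
  simp only [pderiv_mul, pderiv_X, pderiv_C, map_sum, zero_mul, mul_zero, add_zero, zero_add,
    Pi.single_apply]
  rw [Finset.sum_eq_single k]
  · simp [map_mul]
  · intro b _ hb
    simp [hb]
  · simp

/-- `Δ{⟨z,z⟩⟨Az,z⟩}` = (n+2)⟨Az,z⟩ + Tr(A)⟨z,z⟩`. -/
theorem stmt0 (n e : ℕ) (he : e ≤ n) (A : Matrix (Fin n) (Fin n) ℂ) :
    Lap n e (hermPoly n e * hermPolyA n e A) =
      C ((n : ℂ) + 2) * hermPolyA n e A + C (Matrix.trace A) * hermPoly n e := by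
  have hk : ∀ k : Fin n,
      C (eps n e k) * pderiv (Sum.inl k) (pderiv (Sum.inr k) (hermPoly n e * hermPolyA n e A))
      = hermPolyA n e A
        + (∑ m : Fin n, C (eps n e m * A m k) * (X (Sum.inl k) * X (Sum.inr m)))
        + C (eps n e k) * (X (Sum.inr k) * ∑ j : Fin n, C (A k j) * X (Sum.inl j))
        + C (A k k) * hermPoly n e := by
    intro k
    rw [pderiv_mul, dP_inr, dQ_inr, map_add, pderiv_mul, pderiv_mul, pderiv_mul, dP_inl, dQ_inl,
      pderiv_mul, pderiv_C, pderiv_X_self, map_sum]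
    have h1 : ∀ j : Fin n, pderiv (Sum.inl k) (C (A k j) * X (Sum.inl j))
        = C (A k j) * (if j = k then (1 : MvPolynomial (Fin n ⊕ Fin n) ℂ) else 0) := by
      intro j
      simp [pderiv_mul, pderiv_X, Pi.single_apply]
    simp only [h1, mul_ite, mul_one, mul_zero, Finset.sum_ite_eq', Finset.mem_univ, if_true]
    have he2 : (C (eps n e k) : MvPolynomial (Fin n ⊕ Fin n) ℂ) * C (eps n e k) = 1 := by
      rw [← map_mul, eps_sq, map_one]
    have hx : (∑ m : Fin n, C (eps n e m * A m k) * (X (Sum.inl k) * X (Sum.inr m)))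
        = X (Sum.inl k) * ∑ m : Fin n, C (eps n e m * A m k) * X (Sum.inr m) := by
      rw [Finset.mul_sum]; exact Finset.sum_congr rfl fun m _ => by ring
    rw [hx]
    linear_combination (hermPolyA n e A
      + X (Sum.inl k) * ∑ m : Fin n, C (eps n e m * A m k) * X (Sum.inr m)
      + C (eps n e k) * (X (Sum.inr k) * ∑ j : Fin n, C (A k j) * X (Sum.inl j))
      + C (A k k) * hermPoly n e) * he2
  unfold Lap
  rw [Finset.sum_congr rfl fun k _ => hk k]
  simp only [Finset.sum_add_distrib]
  rw [Finset.sum_const, Finset.card_univ, Fintype.card_fin, Finset.sum_comm]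
  have h2 : (∑ m : Fin n, ∑ k : Fin n, C (eps n e m * A m k) * (X (Sum.inl k) * X (Sum.inr m)))
      = hermPolyA n e A := by
    unfold hermPolyA
    refine Finset.sum_congr rfl fun m _ => ?_
    rw [Finset.mul_sum, Finset.sum_mul]
    exact Finset.sum_congr rfl fun k _ => by rw [map_mul]; ring
  have h3 : (∑ k : Fin n, C (eps n e k) * (X (Sum.inr k) * ∑ j : Fin n, C (A k j) * X (Sum.inl j)))
      = hermPolyA n e A := by
    unfold hermPolyA
    exact Finset.sum_congr rfl fun k _ => by ring
  have h4 : (∑ k : Fin n, C (A k k) * hermPoly n e) = C (Matrix.trace A) * hermPoly n e := by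
    rw [← Finset.sum_mul, ← map_sum]; rfl
  rw [h2, h3, h4, nsmul_eq_mul, map_add, map_natCast, map_ofNat]
  ring
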